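/- Soundness and completeness of subgraph abstraction: for arrangements α and β of G with a partition into induced subgraphs, there exists an abstract plan from γ(α) to γ(β) if and only if there exists a concrete plan from α to β in G. -/

import Mathlib

open scoped Classical

/-- An arrangement of robots `R` on vertices `V`: an injective partial map `V ⇀ R`. -/
abbrev Arrangement (V R : Type) := V → Option R

/-- Injectivity of an arrangement: no robot occupies two vertices. -/
def ArrInj {V R : Type} (a : Arrangement V R) : Prop :=
  ∀ u v r, a u = some r → a v = some r → u = v

/-- A plan-step `(r, u, v)` is applicable if `r` is at `u`, `v` is unoccupied,
and `(u,v)` is an edge. -/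
def Applicable {V R : Type} (G : SimpleGraph V) (a : Arrangement V R)
    (s : R × V × V) : Prop :=
  G.Adj s.2.1 s.2.2 ∧ a s.2.1 = some s.1 ∧ a s.2.2 = none

/-- Applying a plan-step: move the robot from `u` to `v`. -/
noncomputable def applyStep {V R : Type} (a : Arrangement V R) (s : R × V × V) :
    Arrangement V R :=
  fun w => if w = s.2.2 then some s.1 else if w = s.2.1 then none else a w

/-- `IsPlan G P a b`: the sequence of plan-steps `P` is a valid concrete plan in `G`
transforming arrangement `a` into arrangement `b`. -/
def IsPlan {V R : Type} (G : SimpleGraph V) :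
    List (R × V × V) → Arrangement V R → Arrangement V R → Prop
  | [], a, b => a = b
  | s :: P, a, b => Applicable G a s ∧ IsPlan G P (applyStep a s) b

/-- Mutual reachability by plans confined to the vertex set `S` (an induced
subgraph of `G`). -/
def SimIn {V R : Type} (G : SimpleGraph V) (S : Set V) (a b : Arrangement V R) : Prop :=
  (∃ P : List (R × V × V), (∀ s ∈ P, s.2.1 ∈ S ∧ s.2.2 ∈ S) ∧ IsPlan G P a b) ∧
  (∃ Q : List (R × V × V), (∀ s ∈ Q, s.2.1 ∈ S ∧ s.2.2 ∈ S) ∧ IsPlan G Q b a)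

/-- The configuration (equivalence class) of the arrangement `a` within the
subgraph `S` of `G`. -/
def clsIn {V R : Type} (G : SimpleGraph V) (S : Set V) (a : Arrangement V R) :
    Set (Arrangement V R) :=
  {b | SimIn G S a b}

/-- The arrangement `a ⊖ r`: remove robot `r`. -/
noncomputable def removeR {V R : Type} (a : Arrangement V R) (r : R) : Arrangement V R :=
  fun w => if a w = some r then none else a w

/-- The arrangement `a ⊕ (r, v)`: add robot `r` at vertex `v`. -/
noncomputable def addR {V R : Type} (a : Arrangement V R) (r : R) (v : V) :
    Arrangement V R :=
  fun w => if w = v then some r else a w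

/-- `c ⊖ (r, u)`: the set of configurations obtained from configuration `c` by
removing robot `r` exiting via vertex `u`. -/
def ominusC {V R : Type} (G : SimpleGraph V) (S : Set V)
    (c : Set (Arrangement V R)) (r : R) (u : V) : Set (Set (Arrangement V R)) :=
  {C | ∃ a ∈ c, a u = some r ∧ C = clsIn G S (removeR a r)}

/-- `c ⊕ (r, v)`: the set of configurations obtained from configuration `c` by
adding robot `r` entering at vertex `v`. -/
def oplusC {V R : Type} (G : SimpleGraph V) (S : Set V)
    (c : Set (Arrangement V R)) (r : R) (v : V) : Set (Set (Arrangement V R)) :=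
  {C | ∃ a ∈ c, a v = none ∧ C = clsIn G S (addR a r v)}

/-- The restriction `a / S` of an arrangement to a vertex set. -/
noncomputable def restrictArr {V R : Type} (a : Arrangement V R) (S : Set V) :
    Arrangement V R :=
  fun v => if v ∈ S then a v else none

/-- The configuration tuple `γ(a)` of an arrangement: the tuple of configurations
induced by `a` on each subgraph of the partition. -/
noncomputable def gammaOf {V R : Type} {m : ℕ} (G : SimpleGraph V)
    (S : Fin m → Set V) (a : Arrangement V R) : Fin m → Set (Arrangement V R) :=
  fun i => clsIn G (S i) (restrictArr a (S i))

/-- `AbstractPlan G S γ γ'`: there is an abstract plan (a sequence of subgraph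
transitions, each applicable to the current configuration tuple, with each
successive tuple resulting from applying the transition) from configuration tuple
`γ` to configuration tuple `γ'`. -/
inductive AbstractPlan {V R : Type} {m : ℕ} (G : SimpleGraph V) (S : Fin m → Set V) :
    (Fin m → Set (Arrangement V R)) → (Fin m → Set (Arrangement V R)) → Prop
  | refl (γ : Fin m → Set (Arrangement V R)) : AbstractPlan G S γ γ
  | step (γ γ' γ'' : Fin m → Set (Arrangement V R)) (r : R) (u v : V) (x y : Fin m) :
      x ≠ y → u ∈ S x → v ∈ S y → G.Adj u v →
      γ' x ∈ ominusC G (S x) (γ x) r u →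
      γ' y ∈ oplusC G (S y) (γ y) r v →
      (∀ z : Fin m, z ≠ x → z ≠ y → γ' z = γ z) →
      AbstractPlan G S γ' γ'' → AbstractPlan G S γ γ''

section Aux
variable {V R : Type} {G : SimpleGraph V}

lemma arrInj_applyStep {a : Arrangement V R} {s : R × V × V}
    (ha : ArrInj a) (hs : Applicable G a s) : ArrInj (applyStep a s) := by
  obtain ⟨hadj, hu, hv⟩ := hs
  intro w w' r' hw hw'
  simp only [applyStep] at hw hw'
  by_cases h1 : w = s.2.2 <;> by_cases h2 : w' = s.2.2
  · exact h1.trans h2.symm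
  · rw [if_pos h1] at hw
    rw [if_neg h2] at hw'
    obtain rfl : s.1 = r' := Option.some.inj hw
    by_cases h4 : w' = s.2.1
    · rw [if_pos h4] at hw'
      exact absurd hw'.symm (Option.some_ne_none _)
    · rw [if_neg h4] at hw'
      exact absurd (ha w' s.2.1 s.1 hw' hu) h4
  · rw [if_pos h2] at hw'
    rw [if_neg h1] at hw
    obtain rfl : s.1 = r' := Option.some.inj hw'
    by_cases h3 : w = s.2.1
    · rw [if_pos h3] at hw
      exact absurd hw.symm (Option.some_ne_none _)
    · rw [if_neg h3] at hw
      exact absurd (ha w s.2.1 s.1 hw hu) h3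
  · rw [if_neg h1] at hw
    rw [if_neg h2] at hw'
    by_cases h3 : w = s.2.1 <;> by_cases h4 : w' = s.2.1
    · exact h3.trans h4.symm
    · rw [if_pos h3] at hw
      exact absurd hw.symm (Option.some_ne_none _)
    · rw [if_pos h4] at hw'
      exact absurd hw'.symm (Option.some_ne_none _)
    · rw [if_neg h3] at hw
      rw [if_neg h4] at hw'
      exact ha w w' r' hw hw'

lemma isPlan_append : ∀ {P Q : List (R × V × V)} {a b c : Arrangement V R},
    IsPlan G P a b → IsPlan G Q b c → IsPlan G (P ++ Q) a c := by
  intro P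
  induction P with
  | nil =>
    intro Q a b c h h'
    simp only [IsPlan] at h
    rw [List.nil_append, h]
    exact h'
  | cons s P ih =>
    intro Q a b c h h'
    simp only [IsPlan] at h ⊢
    exact ⟨h.1, ih h.2 h'⟩

lemma arrInj_plan : ∀ {P : List (R × V × V)} {a b : Arrangement V R},
    ArrInj a → IsPlan G P a b → ArrInj b := by
  intro P
  induction P with
  | nil => intro a b ha h; simp only [IsPlan] at h; exact h ▸ ha
  | cons s P ih =>
    intro a b ha h
    simp only [IsPlan] at h
    exact ih (arrInj_applyStep ha h.1) h.2

lemma simIn_refl (Sv : Set V) (a : Arrangement V R) : SimIn G Sv a a :=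
  ⟨⟨[], by simp, by simp [IsPlan]⟩, ⟨[], by simp, by simp [IsPlan]⟩⟩

lemma simIn_symm {Sv : Set V} {a b : Arrangement V R} (h : SimIn G Sv a b) :
    SimIn G Sv b a := ⟨h.2, h.1⟩

lemma simIn_trans {Sv : Set V} {a b c : Arrangement V R} (h : SimIn G Sv a b)
    (h' : SimIn G Sv b c) : SimIn G Sv a c := by
  obtain ⟨⟨P, hPc, hP⟩, ⟨Q, hQc, hQ⟩⟩ := h
  obtain ⟨⟨P', hPc', hP'⟩, ⟨Q', hQc', hQ'⟩⟩ := h'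
  refine ⟨⟨P ++ P', ?_, isPlan_append hP hP'⟩, ⟨Q' ++ Q, ?_, isPlan_append hQ' hQ⟩⟩ <;>
      intro s hs <;> rw [List.mem_append] at hs <;> rcases hs with h | h
  exacts [hPc s h, hPc' s h, hQc' s h, hQc s h]

lemma clsIn_eq_of_simIn {Sv : Set V} {a b : Arrangement V R} (h : SimIn G Sv a b) :
    clsIn G Sv a = clsIn G Sv b := by
  ext c
  exact ⟨fun hc => simIn_trans (simIn_symm h) hc, fun hc => simIn_trans h hc⟩

lemma restrictArr_applyStep {a : Arrangement V R} {Sv : Set V} {s : R × V × V}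
    (h1 : s.2.1 ∈ Sv) (h2 : s.2.2 ∈ Sv) :
    restrictArr (applyStep a s) Sv = applyStep (restrictArr a Sv) s := by
  funext w
  simp only [restrictArr, applyStep]
  by_cases hw : w ∈ Sv
  · simp [hw]
  · have e2 : w ≠ s.2.2 := fun h => hw (h ▸ h2)
    have e1 : w ≠ s.2.1 := fun h => hw (h ▸ h1)
    simp [hw, e1, e2]

lemma applicable_of_restrict {a : Arrangement V R} {Sv : Set V} {s : R × V × V}
    (h1 : s.2.1 ∈ Sv) (h2 : s.2.2 ∈ Sv) (h : Applicable G (restrictArr a Sv) s) :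
    Applicable G a s := by
  obtain ⟨hadj, hu, hv⟩ := h
  simp only [restrictArr] at hu hv
  rw [if_pos h1] at hu
  rw [if_pos h2] at hv
  exact ⟨hadj, hu, hv⟩

lemma arrInj_restrict {a : Arrangement V R} (ha : ArrInj a) (Sv : Set V) :
    ArrInj (restrictArr a Sv) := by
  intro u v r hu hv
  simp only [restrictArr] at hu hv
  split_ifs at hu hv
  exact ha u v r hu hv

lemma lift_plan {Sv : Set V} : ∀ {P : List (R × V × V)} {a c : Arrangement V R},
    (∀ s ∈ P, s.2.1 ∈ Sv ∧ s.2.2 ∈ Sv) → IsPlan G P (restrictArr a Sv) c →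
    ∃ b, IsPlan G P a b ∧ restrictArr b Sv = c ∧ ∀ w, w ∉ Sv → b w = a w := by
  intro P
  induction P with
  | nil =>
    intro a c _ h
    simp only [IsPlan] at h
    exact ⟨a, by simp [IsPlan], h, fun _ _ => rfl⟩
  | cons s P ih =>
    intro a c hconf h
    simp only [IsPlan] at h
    obtain ⟨happ, hP⟩ := h
    have hs := hconf s (List.mem_cons_self)
    have happ' : Applicable G a s := applicable_of_restrict hs.1 hs.2 happ
    rw [← restrictArr_applyStep hs.1 hs.2] at hP
    obtain ⟨b, hb1, hb2, hb3⟩ := ih (fun t ht => hconf t (List.mem_cons_of_mem s ht)) hP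
    refine ⟨b, ?_, hb2, fun w hw => ?_⟩
    · simp only [IsPlan]; exact ⟨happ', hb1⟩
    · rw [hb3 w hw]
      simp only [applyStep]
      have e2 : w ≠ s.2.2 := fun h => hw (h ▸ hs.2)
      have e1 : w ≠ s.2.1 := fun h => hw (h ▸ hs.1)
      simp [e1, e2]

lemma simIn_applyStep {Sv : Set V} {a : Arrangement V R} {r : R} {u v : V}
    (hu : u ∈ Sv) (hv : v ∈ Sv) (h : Applicable G a (r, u, v)) :
    SimIn G Sv a (applyStep a (r, u, v)) := by
  obtain ⟨hadj, hau, hav⟩ := h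
  have hne : u ≠ v := G.ne_of_adj hadj
  refine ⟨⟨[(r, u, v)], ?_, ?_⟩, ⟨[(r, v, u)], ?_, ?_⟩⟩
  · intro s hs
    simp only [List.mem_singleton] at hs
    subst hs
    exact ⟨hu, hv⟩
  · simp only [IsPlan]
    exact ⟨⟨hadj, hau, hav⟩, trivial⟩
  · intro s hs
    simp only [List.mem_singleton] at hs
    subst hs
    exact ⟨hv, hu⟩
  · simp only [IsPlan]
    refine ⟨⟨hadj.symm, ?_, ?_⟩, ?_⟩
    · show applyStep a (r, u, v) v = some r
      simp [applyStep]
    · show applyStep a (r, u, v) u = none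
      simp [applyStep, hne]
    · funext w
      show (if w = u then some r else if w = v then none
        else applyStep a (r, u, v) w) = a w
      by_cases h1 : w = u
      · subst h1
        rw [if_pos rfl, hau]
      · rw [if_neg h1]
        by_cases h2 : w = v
        · subst h2
          rw [if_pos rfl, hav]
        · rw [if_neg h2]
          show (if w = v then some r else if w = u then none else a w) = a w
          rw [if_neg h2, if_neg h1]

lemma plan_of_simIn_list {m : ℕ} {S : Fin m → Set V}
    (hdisj : ∀ i j, i ≠ j → Disjoint (S i) (S j)) :
    ∀ (L : List (Fin m)), L.Nodup → ∀ (α β : Arrangement V R),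
    (∀ i ∈ L, SimIn G (S i) (restrictArr α (S i)) (restrictArr β (S i))) →
    ∃ α', (∃ P, IsPlan G P α α') ∧
      (∀ i ∈ L, restrictArr α' (S i) = restrictArr β (S i)) ∧
      ∀ w, (∀ i ∈ L, w ∉ S i) → α' w = α w := by
  intro L
  induction L with
  | nil =>
    intro _ α β _
    exact ⟨α, ⟨[], by simp [IsPlan]⟩, by simp, fun _ _ => rfl⟩
  | cons j L ih =>
    intro hnd α β hsim
    have hj : SimIn G (S j) (restrictArr α (S j)) (restrictArr β (S j)) :=
      hsim j (List.mem_cons_self)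
    obtain ⟨⟨P1, hP1c, hP1⟩, -⟩ := hj
    obtain ⟨α1, hα1P, hα1res, hα1off⟩ := lift_plan hP1c hP1
    have hjL : j ∉ L := (List.nodup_cons.mp hnd).1
    have hres : ∀ i ∈ L, restrictArr α1 (S i) = restrictArr α (S i) := by
      intro i hi
      funext w
      simp only [restrictArr]
      by_cases hw : w ∈ S i
      · have hwj : w ∉ S j :=
          Set.disjoint_left.mp (hdisj i j (fun h => hjL (h ▸ hi))) hw
        simp [hw, hα1off w hwj]
      · simp [hw]
    obtain ⟨α', ⟨Q, hQ⟩, hres', hoff'⟩ := ih (List.nodup_cons.mp hnd).2 α1 β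
      (fun i hi => (hres i hi) ▸ hsim i (List.mem_cons_of_mem j hi))
    refine ⟨α', ⟨P1 ++ Q, isPlan_append hα1P hQ⟩, ?_, ?_⟩
    · intro i hi
      rcases List.mem_cons.mp hi with rfl | hi'
      · have key : ∀ w ∈ S i, α' w = α1 w := by
          intro w hw
          refine hoff' w (fun k hk hwk => ?_)
          exact Set.disjoint_left.mp (hdisj i k (fun h => hjL (h ▸ hk))) hw hwk
        funext w
        by_cases hw : w ∈ S i
        · have h1 : restrictArr α' (S i) w = α' w := if_pos hw
          have h2 : restrictArr α1 (S i) w = α1 w := if_pos hw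
          rw [h1, key w hw, ← h2, hα1res]
        · have h1 : restrictArr α' (S i) w = none := if_neg hw
          have h2 : restrictArr β (S i) w = none := if_neg hw
          rw [h1, h2]
      · exact hres' i hi'
    · intro w hw
      rw [hoff' w (fun i hi => hw i (List.mem_cons_of_mem j hi)),
        hα1off w (hw j (List.mem_cons_self))]

lemma plan_of_gamma_eq {m : ℕ} {S : Fin m → Set V}
    (hdisj : ∀ i j, i ≠ j → Disjoint (S i) (S j))
    (hcover : (⋃ i, S i) = Set.univ)
    (α β : Arrangement V R) (h : gammaOf G S α = gammaOf G S β) :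
    ∃ P, IsPlan G P α β := by
  have hsim : ∀ i, SimIn G (S i) (restrictArr α (S i)) (restrictArr β (S i)) := by
    intro i
    have hmem : restrictArr β (S i) ∈ clsIn G (S i) (restrictArr β (S i)) :=
      simIn_refl _ _
    have := congrFun h i
    simp only [gammaOf] at this
    rw [← this] at hmem
    exact hmem
  obtain ⟨α', ⟨P, hP⟩, hres, -⟩ := plan_of_simIn_list hdisj (List.finRange m)
    (List.nodup_finRange m) α β (fun i _ => hsim i)
  have : α' = β := by
    funext w
    have hw : w ∈ ⋃ i, S i := by rw [hcover]; exact Set.mem_univ w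
    obtain ⟨i, hi⟩ := Set.mem_iUnion.mp hw
    have h1 : restrictArr α' (S i) w = α' w := if_pos hi
    have h2 : restrictArr β (S i) w = β w := if_pos hi
    rw [← h1, hres i (List.mem_finRange i), h2]
  exact ⟨P, this ▸ hP⟩

lemma step_concrete {m : ℕ} {S : Fin m → Set V}
    (hdisj : ∀ i j, i ≠ j → Disjoint (S i) (S j))
    {α : Arrangement V R} (hα : ArrInj α)
    {γ' : Fin m → Set (Arrangement V R)} {r : R} {u v : V} {x y : Fin m}
    (hxy : x ≠ y) (hu : u ∈ S x) (hv : v ∈ S y) (hadj : G.Adj u v)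
    (hom : γ' x ∈ ominusC G (S x) (gammaOf G S α x) r u)
    (hop : γ' y ∈ oplusC G (S y) (gammaOf G S α y) r v)
    (hoth : ∀ z, z ≠ x → z ≠ y → γ' z = gammaOf G S α z) :
    ∃ α', ArrInj α' ∧ gammaOf G S α' = γ' ∧ ∃ P, IsPlan G P α α' := by
  obtain ⟨a, ha, hau, hγ'x⟩ := hom
  obtain ⟨b, hb, hbv, hγ'y⟩ := hop
  have hdxy : Disjoint (S x) (S y) := hdisj x y hxy
  have hsa : SimIn G (S x) (restrictArr α (S x)) a := ha
  obtain ⟨⟨P1, hP1c, hP1⟩, -⟩ := hsa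
  obtain ⟨α1, hP1', hres1, hoff1⟩ := lift_plan hP1c hP1
  have hα1 : ArrInj α1 := arrInj_plan hα hP1'
  have hresy : restrictArr α1 (S y) = restrictArr α (S y) := by
    funext w
    simp only [restrictArr]
    by_cases hw : w ∈ S y
    · have hwx : w ∉ S x := Set.disjoint_right.mp hdxy hw
      simp [hw, hoff1 w hwx]
    · simp [hw]
  have hsb : SimIn G (S y) (restrictArr α1 (S y)) b := by
    rw [hresy]; exact hb
  obtain ⟨⟨P2, hP2c, hP2⟩, -⟩ := hsb
  obtain ⟨α2, hP2', hres2, hoff2⟩ := lift_plan hP2c hP2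
  have hα2 : ArrInj α2 := arrInj_plan hα1 hP2'
  have hα2u : α2 u = some r := by
    have h1 : α2 u = α1 u := hoff2 u (Set.disjoint_left.mp hdxy hu)
    have h2 : restrictArr α1 (S x) u = α1 u := if_pos hu
    rw [h1, ← h2, hres1]; exact hau
  have hα2v : α2 v = none := by
    have h2 : restrictArr α2 (S y) v = α2 v := if_pos hv
    rw [← h2, hres2]; exact hbv
  have happ : Applicable G α2 (r, u, v) := ⟨hadj, hα2u, hα2v⟩
  have hα3 : ArrInj (applyStep α2 (r, u, v)) := arrInj_applyStep hα2 happ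
  have hainja : ArrInj a := by
    rw [← hres1]; exact arrInj_restrict hα1 _
  have haoff : ∀ w, w ∉ S x → a w = none := by
    intro w hw
    rw [← hres1]
    exact if_neg hw
  have hboff : ∀ w, w ∉ S y → b w = none := by
    intro w hw
    rw [← hres2]
    exact if_neg hw
  refine ⟨applyStep α2 (r, u, v), hα3, ?_, ⟨P1 ++ (P2 ++ [(r, u, v)]), ?_⟩⟩
  · funext i
    by_cases hix : i = x
    · rw [hix, hγ'x]
      have heq : restrictArr (applyStep α2 (r, u, v)) (S x) = removeR a r := by
        funext w
        show (if w ∈ S x then applyStep α2 (r, u, v) w else none) =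
          if a w = some r then none else a w
        by_cases hw : w ∈ S x
        · rw [if_pos hw]
          have hwv : w ≠ v := fun h => Set.disjoint_left.mp hdxy hw (h ▸ hv)
          have hwy : w ∉ S y := Set.disjoint_left.mp hdxy hw
          have haw : a w = α1 w := by rw [← hres1]; exact if_pos hw
          show (if w = v then some r else if w = u then none else α2 w) = _
          rw [if_neg hwv]
          by_cases hwu : w = u
          · rw [if_pos hwu, if_pos (show a w = some r by rw [hwu]; exact hau)]
          · rw [if_neg hwu, hoff2 w hwy, ← haw,
              if_neg (fun hh => hwu (hainja w u r hh hau))]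
        · rw [if_neg hw, haoff w hw, if_neg (Option.some_ne_none r).symm]
      show clsIn G (S x) (restrictArr (applyStep α2 (r, u, v)) (S x)) =
        clsIn G (S x) (removeR a r)
      rw [heq]
    · by_cases hiy : i = y
      · rw [hiy, hγ'y]
        have heq : restrictArr (applyStep α2 (r, u, v)) (S y) = addR b r v := by
          funext w
          show (if w ∈ S y then applyStep α2 (r, u, v) w else none) =
            if w = v then some r else b w
          by_cases hw : w ∈ S y
          · rw [if_pos hw]
            have hwu : w ≠ u := fun h => Set.disjoint_right.mp hdxy hw (h ▸ hu)
            have hbw : b w = α2 w := by rw [← hres2]; exact if_pos hw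
            show (if w = v then some r else if w = u then none else α2 w) = _
            by_cases hwv : w = v
            · rw [if_pos hwv, if_pos hwv]
            · rw [if_neg hwv, if_neg hwv, if_neg hwu, hbw]
          · rw [if_neg hw]
            have hwv : w ≠ v := fun h => hw (h ▸ hv)
            rw [if_neg hwv, hboff w hw]
        show clsIn G (S y) (restrictArr (applyStep α2 (r, u, v)) (S y)) =
          clsIn G (S y) (addR b r v)
        rw [heq]
      · rw [hoth i hix hiy]
        have heq : restrictArr (applyStep α2 (r, u, v)) (S i) = restrictArr α (S i) := by
          funext w
          show (if w ∈ S i then applyStep α2 (r, u, v) w else none) =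
            if w ∈ S i then α w else none
          by_cases hw : w ∈ S i
          · rw [if_pos hw, if_pos hw]
            have hwx : w ∉ S x := Set.disjoint_left.mp (hdisj i x hix) hw
            have hwy : w ∉ S y := Set.disjoint_left.mp (hdisj i y hiy) hw
            have hwu : w ≠ u := fun h => hwx (h ▸ hu)
            have hwv : w ≠ v := fun h => hwy (h ▸ hv)
            show (if w = v then some r else if w = u then none else α2 w) = α w
            rw [if_neg hwv, if_neg hwu, hoff2 w hwy, hoff1 w hwx]
          · rw [if_neg hw, if_neg hw]
        show clsIn G (S i) (restrictArr (applyStep α2 (r, u, v)) (S i)) =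
          clsIn G (S i) (restrictArr α (S i))
        rw [heq]
  · refine isPlan_append hP1' (isPlan_append hP2' ?_)
    simp only [IsPlan]
    exact ⟨happ, trivial⟩

end Aux

/-- Soundness and completeness of subgraph abstraction: for arrangements `α` and
`β` of `G` with a partition into induced subgraphs, there exists an abstract plan
from `γ(α)` to `γ(β)` if and only if there exists a concrete plan from `α` to `β`
in `G`. -/
theorem abstract_plan_iff_concrete_plan {V R : Type} {m : ℕ} (G : SimpleGraph V)
    (S : Fin m → Set V)
    (hdisj : ∀ i j, i ≠ j → Disjoint (S i) (S j))
    (hcover : (⋃ i, S i) = Set.univ)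
    (α β : Arrangement V R) (hα : ArrInj α) (hβ : ArrInj β) :
    AbstractPlan G S (gammaOf G S α) (gammaOf G S β) ↔
      ∃ P : List (R × V × V), IsPlan G P α β := by
  constructor
  · intro h
    have key : ∀ γ γ'', AbstractPlan G S γ γ'' → ∀ α' : Arrangement V R, ArrInj α' →
        gammaOf G S α' = γ → gammaOf G S β = γ'' → ∃ P, IsPlan G P α' β := by
      intro γ γ'' hap
      induction hap with
      | refl γ =>
        intro α' hα' h1 h2
        exact plan_of_gamma_eq hdisj hcover α' β (h1.trans h2.symm)
      | step γ γ1 γ2 r u v x y hxy hu hv hadj hom hop hoth htail ih =>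
        intro α' hα' h1 h2
        subst h1
        obtain ⟨α3, hα3, hγ3, P0, hP0⟩ :=
          step_concrete hdisj hα' hxy hu hv hadj hom hop hoth
        obtain ⟨P1, hP1⟩ := ih α3 hα3 hγ3 h2
        exact ⟨P0 ++ P1, isPlan_append hP0 hP1⟩
    exact key _ _ h α hα rfl rfl
  · rintro ⟨P, hP⟩
    have key : ∀ (P : List (R × V × V)) (α' : Arrangement V R), ArrInj α' →
        IsPlan G P α' β → AbstractPlan G S (gammaOf G S α') (gammaOf G S β) := by
      intro P
      induction P with
      | nil =>
        intro α' hα' h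
        simp only [IsPlan] at h
        rw [h]
        exact AbstractPlan.refl _
      | cons s Q ih =>
        intro α' hα' h
        obtain ⟨r, u, v⟩ := s
        simp only [IsPlan] at h
        obtain ⟨happ, hQ⟩ := h
        obtain ⟨hadj, hau, hav⟩ := happ
        have hmu : u ∈ ⋃ i, S i := by rw [hcover]; exact Set.mem_univ u
        have hmv : v ∈ ⋃ i, S i := by rw [hcover]; exact Set.mem_univ v
        obtain ⟨x, hu⟩ := Set.mem_iUnion.mp hmu
        obtain ⟨y, hv⟩ := Set.mem_iUnion.mp hmv
        have hIH := ih (applyStep α' (r, u, v))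
          (arrInj_applyStep hα' ⟨hadj, hau, hav⟩) hQ
        by_cases hxy : x = y
        · have hv' : v ∈ S x := hxy.symm ▸ hv
          have hgeq : gammaOf G S (applyStep α' (r, u, v)) = gammaOf G S α' := by
            funext i
            by_cases hix : i = x
            · rw [hix]
              show clsIn G (S x) (restrictArr (applyStep α' (r, u, v)) (S x)) =
                clsIn G (S x) (restrictArr α' (S x))
              rw [restrictArr_applyStep (s := (r, u, v)) hu hv']
              refine (clsIn_eq_of_simIn (simIn_applyStep hu hv' ⟨hadj, ?_, ?_⟩)).symm
              · show restrictArr α' (S x) u = some r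
                rw [show restrictArr α' (S x) u = α' u from if_pos hu]
                exact hau
              · show restrictArr α' (S x) v = none
                rw [show restrictArr α' (S x) v = α' v from if_pos hv']
                exact hav
            · show clsIn G (S i) (restrictArr (applyStep α' (r, u, v)) (S i)) =
                clsIn G (S i) (restrictArr α' (S i))
              have heq : restrictArr (applyStep α' (r, u, v)) (S i) =
                  restrictArr α' (S i) := by
                funext w
                show (if w ∈ S i then applyStep α' (r, u, v) w else none) =
                  if w ∈ S i then α' w else none
                by_cases hw : w ∈ S i
                · rw [if_pos hw, if_pos hw]
                  have hwx : w ∉ S x := Set.disjoint_left.mp (hdisj i x hix) hw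
                  have hwu : w ≠ u := fun hh => hwx (hh ▸ hu)
                  have hwv : w ≠ v := fun hh => hwx (hh ▸ hv')
                  show (if w = v then some r else if w = u then none else α' w) = α' w
                  rw [if_neg hwv, if_neg hwu]
                · rw [if_neg hw, if_neg hw]
              rw [heq]
          rw [← hgeq]
          exact hIH
        · refine AbstractPlan.step _ (gammaOf G S (applyStep α' (r, u, v))) _ r u v x y
            hxy hu hv hadj ?_ ?_ ?_ hIH
          · refine ⟨restrictArr α' (S x), simIn_refl _ _, ?_, ?_⟩
            · show restrictArr α' (S x) u = some r
              rw [show restrictArr α' (S x) u = α' u from if_pos hu]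
              exact hau
            · show clsIn G (S x) (restrictArr (applyStep α' (r, u, v)) (S x)) =
                clsIn G (S x) (removeR (restrictArr α' (S x)) r)
              have heq : restrictArr (applyStep α' (r, u, v)) (S x) =
                  removeR (restrictArr α' (S x)) r := by
                funext w
                show (if w ∈ S x then applyStep α' (r, u, v) w else none) =
                  if restrictArr α' (S x) w = some r then none
                  else restrictArr α' (S x) w
                by_cases hw : w ∈ S x
                · rw [if_pos hw]
                  have hrw : restrictArr α' (S x) w = α' w := if_pos hw
                  have hwv : w ≠ v := fun hh =>
                    Set.disjoint_left.mp (hdisj x y hxy) hw (hh ▸ hv)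
                  show (if w = v then some r else if w = u then none else α' w) = _
                  rw [if_neg hwv, hrw]
                  by_cases hwu : w = u
                  · rw [if_pos hwu,
                      if_pos (show α' w = some r by rw [hwu]; exact hau)]
                  · rw [if_neg hwu, if_neg (fun hh => hwu (hα' w u r hh hau))]
                · rw [if_neg hw]
                  have hrw : restrictArr α' (S x) w = none := if_neg hw
                  rw [hrw, if_neg (Option.some_ne_none r).symm]
              rw [heq]
          · refine ⟨restrictArr α' (S y), simIn_refl _ _, ?_, ?_⟩
            · show restrictArr α' (S y) v = none
              rw [show restrictArr α' (S y) v = α' v from if_pos hv]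
              exact hav
            · show clsIn G (S y) (restrictArr (applyStep α' (r, u, v)) (S y)) =
                clsIn G (S y) (addR (restrictArr α' (S y)) r v)
              have heq : restrictArr (applyStep α' (r, u, v)) (S y) =
                  addR (restrictArr α' (S y)) r v := by
                funext w
                show (if w ∈ S y then applyStep α' (r, u, v) w else none) =
                  if w = v then some r else restrictArr α' (S y) w
                by_cases hw : w ∈ S y
                · rw [if_pos hw]
                  have hrw : restrictArr α' (S y) w = α' w := if_pos hw
                  have hwu : w ≠ u := fun hh =>
                    Set.disjoint_right.mp (hdisj x y hxy) hw (hh ▸ hu)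
                  show (if w = v then some r else if w = u then none else α' w) = _
                  rw [hrw]
                  by_cases hwv : w = v
                  · rw [if_pos hwv, if_pos hwv]
                  · rw [if_neg hwv, if_neg hwv, if_neg hwu]
                · rw [if_neg hw]
                  have hwv : w ≠ v := fun hh => hw (hh ▸ hv)
                  have hrw : restrictArr α' (S y) w = none := if_neg hw
                  rw [if_neg hwv, hrw]
              rw [heq]
          · intro z hzx hzy
            show clsIn G (S z) (restrictArr (applyStep α' (r, u, v)) (S z)) =
              clsIn G (S z) (restrictArr α' (S z))
            have heq : restrictArr (applyStep α' (r, u, v)) (S z) =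
                restrictArr α' (S z) := by
              funext w
              show (if w ∈ S z then applyStep α' (r, u, v) w else none) =
                if w ∈ S z then α' w else none
              by_cases hw : w ∈ S z
              · rw [if_pos hw, if_pos hw]
                have hwu : w ≠ u := fun hh =>
                  Set.disjoint_left.mp (hdisj z x hzx) hw (hh ▸ hu)
                have hwv : w ≠ v := fun hh =>
                  Set.disjoint_left.mp (hdisj z y hzy) hw (hh ▸ hv)
                show (if w = v then some r else if w = u then none else α' w) = α' w
                rw [if_neg hwv, if_neg hwu]
              · rw [if_neg hw, if_neg hw]
            rw [heq]
    exact key P α hα hP
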